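/- Let G be a finite group, let K be a Carter subgroup of G, and let N be a normal subgroup of G. Assume that any two Carter subgroups of the subgroup KN are conjugate in KN. Then the image KN/N of K under the canonical projection G → G/N is a Carter subgroup of G/N. -/

import Mathlib

open scoped Pointwise


/-- A Carter subgroup of a group `G` is a nilpotent self-normalizing subgroup. -/
def IsCarterSubgroup {G : Type*} [Group G] (K : Subgroup G) : Prop :=
  Group.IsNilpotent K ∧ Subgroup.normalizer (K : Set G) = K

/-- A self-normalizing subgroup contained in `H` is self-normalizing in `H`. -/
lemma subgroupOf_selfNormalizing {G : Type*} [Group G] {K H : Subgroup G}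
    (hKH : K ≤ H) (hK : Subgroup.normalizer (K : Set G) = K) :
    Subgroup.normalizer ((K.subgroupOf H : Subgroup ↥H) : Set ↥H) = K.subgroupOf H := by
  refine le_antisymm ?_ Subgroup.le_normalizer
  intro x hx
  have hxK : (x : G) ∈ Subgroup.normalizer (K : Set G) := by
    rw [Subgroup.mem_normalizer_iff]
    intro h
    constructor
    · intro hh
      have := (Subgroup.mem_normalizer_iff.mp hx ⟨h, hKH hh⟩).mp hh
      exact this
    · intro hh
      have hhH : h ∈ H := by
        have h1 : (x : G) * h * (x : G)⁻¹ ∈ H := hKH hh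
        have := H.mul_mem (H.mul_mem (H.inv_mem x.2) h1) x.2
        simpa [mul_assoc] using this
      have := (Subgroup.mem_normalizer_iff.mp hx ⟨h, hhH⟩).mpr ?_
      · exact this
      · exact hh
  rw [hK] at hxK
  exact hxK

/-- If `K` is a Carter subgroup of `G`, `N ⊴ G`, and Carter subgroups of `KN` are
conjugate, then the image of `K` in `G/N` is a Carter subgroup of `G/N`. -/
theorem carter_image_in_quotient {G : Type*} [Group G] [Finite G]
    (K N : Subgroup G) [N.Normal] (hK : IsCarterSubgroup K)
    (hconj : ∀ K₁ K₂ : Subgroup ↥(K ⊔ N), IsCarterSubgroup K₁ → IsCarterSubgroup K₂ →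
      ∃ g : ↥(K ⊔ N), K₁.map (MulAut.conj g).toMonoidHom = K₂) :
    IsCarterSubgroup (K.map (QuotientGroup.mk' N)) := by
  obtain ⟨hKnil, hKnorm⟩ := hK
  set f := QuotientGroup.mk' N with hf
  set Q := K.map f with hQ
  set H := K ⊔ N with hH
  have hKH : K ≤ H := le_sup_left
  have hcomap : Q.comap f = H := by
    rw [hQ, Subgroup.comap_map_eq, QuotientGroup.ker_mk']
  constructor
  · -- nilpotency of the image
    exact nilpotent_of_surjective (f.subgroupMap K)
      (MonoidHom.subgroupMap_surjective f K)
  · refine le_antisymm ?_ Subgroup.le_normalizer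
    intro xbar hxbar
    obtain ⟨g, rfl⟩ := QuotientGroup.mk'_surjective N xbar
    -- g normalizes H
    have hgH : g ∈ Subgroup.normalizer (H : Set G) := by
      rw [Subgroup.mem_normalizer_iff]
      intro h
      have h1 : ∀ y : G, y ∈ H ↔ f y ∈ Q := by
        intro y; rw [← hcomap]; rfl
      rw [h1 h, h1 (g * h * g⁻¹)]
      have := Subgroup.mem_normalizer_iff.mp hxbar (f h)
      simp only [map_mul, map_inv] at *
      exact this
    -- the conjugate of K by g lies in H
    have hKgH : K.map (MulAut.conj g).toMonoidHom ≤ H := by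
      intro y hy
      obtain ⟨k, hk, rfl⟩ := hy
      exact (Subgroup.mem_normalizer_iff.mp hgH k).mp (hKH hk)
    -- K₁ and K₂ are Carter subgroups of H
    have hC1 : IsCarterSubgroup (K.subgroupOf H) := by
      refine ⟨?_, subgroupOf_selfNormalizing hKH hKnorm⟩
      exact nilpotent_of_mulEquiv (Subgroup.subgroupOfEquivOfLe hKH).symm
    have hnorm2 : Subgroup.normalizer ((K.map (MulAut.conj g).toMonoidHom : Subgroup G) : Set G)
        = K.map (MulAut.conj g).toMonoidHom := by
      rw [← Subgroup.map_equiv_normalizer_eq K (MulAut.conj g), hKnorm]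
    have hC2 : IsCarterSubgroup ((K.map (MulAut.conj g).toMonoidHom).subgroupOf H) := by
      refine ⟨?_, subgroupOf_selfNormalizing hKgH hnorm2⟩
      have e1 : ↥K ≃* ↥(K.map (MulAut.conj g).toMonoidHom) :=
        Subgroup.equivMapOfInjective K _ (MulAut.conj g).injective
      have e2 := Subgroup.subgroupOfEquivOfLe hKgH
      exact nilpotent_of_mulEquiv (e1.trans e2.symm)
    obtain ⟨c, hc⟩ := hconj _ _ hC1 hC2
    -- show h := g⁻¹ * c normalizes K, hence lies in K
    have hmem : g⁻¹ * (c : G) ∈ Subgroup.normalizer (K : Set G) := by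
      rw [Subgroup.mem_normalizer_iff]
      intro x
      constructor
      · intro hx
        have hx1 : (⟨x, hKH hx⟩ : ↥H) ∈ K.subgroupOf H := hx
        have hx2 : (MulAut.conj c) (⟨x, hKH hx⟩ : ↥H)
            ∈ (K.map (MulAut.conj g).toMonoidHom).subgroupOf H := by
          rw [← hc]
          exact ⟨_, hx1, rfl⟩
        obtain ⟨k, hk, hkeq⟩ := hx2
        have hkeq' : (c : G) * x * (c : G)⁻¹ = g * k * g⁻¹ := by
          simpa [MulAut.conj_apply] using hkeq.symm
        have heq : g⁻¹ * (c : G) * x * (g⁻¹ * (c : G))⁻¹ = k := by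
          rw [mul_inv_rev, inv_inv,
            show g⁻¹ * (c : G) * x * ((c : G)⁻¹ * g)
              = g⁻¹ * ((c : G) * x * (c : G)⁻¹) * g by group, hkeq']
          group
        rw [heq]; exact hk
      · intro hx
        -- x = c⁻¹ * (c x c⁻¹) * c with c x c⁻¹ ∈ g K g⁻¹ ≤ H
        set y := g⁻¹ * (c : G) * x * (g⁻¹ * (c : G))⁻¹ with hy
        have hcx : (c : G) * x * (c : G)⁻¹ = g * y * g⁻¹ := by rw [hy]; group
        have hcxH : (c : G) * x * (c : G)⁻¹ ∈ K.map (MulAut.conj g).toMonoidHom := by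
          rw [hcx]; exact ⟨y, hx, rfl⟩
        have hxH : x ∈ H := by
          have h1 : (c : G) * x * (c : G)⁻¹ ∈ H := hKgH hcxH
          have := H.mul_mem (H.mul_mem (H.inv_mem c.2) h1) c.2
          simpa [mul_assoc] using this
        have hx2 : (MulAut.conj c) (⟨x, hxH⟩ : ↥H)
            ∈ (K.map (MulAut.conj g).toMonoidHom).subgroupOf H := by
          show ((MulAut.conj c) (⟨x, hxH⟩ : ↥H) : G) ∈ K.map (MulAut.conj g).toMonoidHom
          simpa using hcxH
        rw [← hc] at hx2
        obtain ⟨z, hz, hzeq⟩ := hx2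
        have : z = (⟨x, hxH⟩ : ↥H) := (MulAut.conj c).injective hzeq
        rw [this] at hz
        exact hz
    rw [hKnorm] at hmem
    -- hence g ∈ H
    have hgmem : g ∈ H := by
      have : g = (c : G) * (g⁻¹ * (c : G))⁻¹ := by group
      rw [this]
      exact H.mul_mem c.2 (H.inv_mem (hKH hmem))
    -- and f g ∈ Q since H = K * N
    have : g ∈ (K : Set G) * (N : Set G) := by
      rw [← Subgroup.mul_normal K N]; exact hgmem
    obtain ⟨k, hk, n, hn, rfl⟩ := this
    have : f (k * n) = f k := by
      simp only [hf, QuotientGroup.mk'_apply]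
      rw [QuotientGroup.mk_mul]
      have : (QuotientGroup.mk n : G ⧸ N) = 1 := (QuotientGroup.eq_one_iff n).mpr hn
      rw [this, mul_one]
    rw [this]
    exact ⟨k, hk, rfl⟩
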